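/- Let α : ℕ → ℝ be nondecreasing with α_n ≥ 0 and α_n → ∞, let θ ∈ Λ_1(α), and suppose S := sup_{q∈ℕ} ∑_{j=1}^∞ |θ_j| e^{−α_j/q} < ∞. Then R_θ is m-topologizable on Λ_1(α) with respect to the sup-seminorms: for every p ∈ ℕ, setting C_p = max(S, 1), one has sup_{m} |(R_θ^k e_n)_m| · e^{−α_m/p} ≤ C_p^k · e^{−α_n/(3p)} for all k ≥ 1 and all n ∈ ℕ. -/

import Mathlib

open scoped BigOperators

/-- The Rhaly map: `(R_θ x)_n = (∑_{j≤n} x_j) · θ_n` (indices starting at 0). -/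
noncomputable def rhaly (θ x : ℕ → ℂ) : ℕ → ℂ :=
  fun n => (∑ j ∈ Finset.range (n + 1), x j) * θ n

/-- The `n`-th unit coordinate sequence. -/
noncomputable def unitSeq (n : ℕ) : ℕ → ℂ := fun m => if m = n then 1 else 0

/-- If `θ ∈ Λ_1(α)` and `S = sup_q ‖θ‖_q < ∞`, then `R_θ` is
m-topologizable on `Λ_1(α)` with respect to the sup-seminorms, with constants
`C_p = max(S, 1)`:
`sup_m |(R_θ^k e_n)_m| e^{-α_m/p} ≤ C_p^k · e^{-α_n/(3p)}`. -/
theorem rhaly_mTopologizable_powerSeriesFinite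
    (α : ℕ → ℝ) (hα_mono : Monotone α) (hα_nonneg : ∀ n, 0 ≤ α n)
    (hα_top : Filter.Tendsto α Filter.atTop Filter.atTop)
    (θ : ℕ → ℂ)
    (hθ : ∀ q : ℕ, 0 < q → Summable fun j => ‖θ j‖ * Real.exp (-(α j) / q))
    (S : ℝ)
    (hS : ∀ q : ℕ, 0 < q → ∑' j : ℕ, ‖θ j‖ * Real.exp (-(α j) / q) ≤ S)
    (p : ℕ) (hp : 0 < p) (k : ℕ) (hk : 1 ≤ k) (n m : ℕ) :
    ‖(rhaly θ)^[k] (unitSeq n) m‖ * Real.exp (-(α m) / p)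
      ≤ (max S 1) ^ k * Real.exp (-(α n) / (3 * p)) := by
  have hS0 : 0 ≤ S := le_trans (tsum_nonneg fun j => by positivity) (hS 1 one_pos)
  -- θ bound for arbitrary real weight q > 0
  have hθR : ∀ q : ℝ, 0 < q → Summable (fun j => ‖θ j‖ * Real.exp (-(α j) / q)) ∧
      ∑' j : ℕ, ‖θ j‖ * Real.exp (-(α j) / q) ≤ S := by
    intro q hq
    set Q : ℕ := ⌈q⌉₊ with hQdef
    have hQ : 0 < Q := Nat.ceil_pos.mpr hq
    have hqQ : q ≤ (Q : ℝ) := Nat.le_ceil q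
    have hQ0 : (0:ℝ) < Q := lt_of_lt_of_le hq hqQ
    have hle : ∀ j, ‖θ j‖ * Real.exp (-(α j) / q) ≤ ‖θ j‖ * Real.exp (-(α j) / Q) := by
      intro j
      apply mul_le_mul_of_nonneg_left _ (norm_nonneg _)
      apply Real.exp_le_exp.mpr
      rw [neg_div, neg_div, neg_le_neg_iff]
      exact div_le_div_of_nonneg_left (hα_nonneg j) hq hqQ
    have hsum : Summable (fun j => ‖θ j‖ * Real.exp (-(α j) / q)) :=
      Summable.of_nonneg_of_le (fun j => by positivity) hle (hθ Q hQ)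
    exact ⟨hsum, le_trans (Summable.tsum_le_tsum hle hsum (hθ Q hQ)) (hS Q hQ)⟩
  -- support lemma
  have hsupp : ∀ k m, m < n → (rhaly θ)^[k] (unitSeq n) m = 0 := by
    intro k
    induction k with
    | zero => intro m hm; simp [unitSeq, Nat.ne_of_lt hm]
    | succ k ih =>
      intro m hm
      rw [Function.iterate_succ_apply']
      show (∑ j ∈ Finset.range (m + 1), (rhaly θ)^[k] (unitSeq n) j) * θ m = 0
      rw [Finset.sum_eq_zero, zero_mul]
      intro j hj
      have hj' : j < m + 1 := Finset.mem_range.mp hj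
      exact ih j (by omega)
  -- key ℓ¹ estimate
  have key : ∀ k : ℕ, 1 ≤ k → ∀ q : ℝ, 0 < q →
      Summable (fun j => ‖(rhaly θ)^[k] (unitSeq n) j‖ * Real.exp (-(α j) / q)) ∧
      ∑' j : ℕ, ‖(rhaly θ)^[k] (unitSeq n) j‖ * Real.exp (-(α j) / q) ≤ S ^ k := by
    intro k hk
    induction k, hk using Nat.le_induction with
    | base =>
      intro q hq
      have hb : ∀ j, ‖(rhaly θ)^[1] (unitSeq n) j‖ * Real.exp (-(α j) / q)
          ≤ ‖θ j‖ * Real.exp (-(α j) / q) := by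
        intro j
        apply mul_le_mul_of_nonneg_right _ (le_of_lt (Real.exp_pos _))
        rw [Function.iterate_one]
        show ‖(∑ i ∈ Finset.range (j + 1), unitSeq n i) * θ j‖ ≤ ‖θ j‖
        rw [norm_mul]
        have : ‖∑ i ∈ Finset.range (j + 1), unitSeq n i‖ ≤ 1 := by
          unfold unitSeq
          rw [Finset.sum_ite_eq' (Finset.range (j+1)) n (fun _ => (1:ℂ))]
          split <;> simp
        calc ‖∑ i ∈ Finset.range (j + 1), unitSeq n i‖ * ‖θ j‖
            ≤ 1 * ‖θ j‖ := mul_le_mul_of_nonneg_right this (norm_nonneg _)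
          _ = ‖θ j‖ := one_mul _
      have hsum : Summable (fun j => ‖(rhaly θ)^[1] (unitSeq n) j‖ * Real.exp (-(α j) / q)) :=
        Summable.of_nonneg_of_le (fun j => by positivity) hb (hθR q hq).1
      refine ⟨hsum, ?_⟩
      rw [pow_one]
      exact le_trans (Summable.tsum_le_tsum hb hsum (hθR q hq).1) (hθR q hq).2
    | succ k hk ih =>
      intro q hq
      have h2q : (0:ℝ) < 2 * q := by linarith
      obtain ⟨ihs, iht⟩ := ih (2 * q) h2q
      have hpt : ∀ m, ‖(rhaly θ)^[k+1] (unitSeq n) m‖ * Real.exp (-(α m) / q)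
          ≤ S ^ k * (‖θ m‖ * Real.exp (-(α m) / (2 * q))) := by
        intro m
        rw [Function.iterate_succ_apply']
        have h1 : ‖rhaly θ ((rhaly θ)^[k] (unitSeq n)) m‖
            ≤ (∑ j ∈ Finset.range (m + 1), ‖(rhaly θ)^[k] (unitSeq n) j‖) * ‖θ m‖ := by
          show ‖(∑ j ∈ Finset.range (m + 1), (rhaly θ)^[k] (unitSeq n) j) * θ m‖ ≤ _
          rw [norm_mul]
          exact mul_le_mul_of_nonneg_right (norm_sum_le _ _) (norm_nonneg _)
        have h2 : ∑ j ∈ Finset.range (m + 1), ‖(rhaly θ)^[k] (unitSeq n) j‖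
            ≤ Real.exp (α m / (2 * q)) * S ^ k := by
          have step1 : ∑ j ∈ Finset.range (m + 1), ‖(rhaly θ)^[k] (unitSeq n) j‖
              ≤ ∑ j ∈ Finset.range (m + 1),
                  (‖(rhaly θ)^[k] (unitSeq n) j‖ * Real.exp (-(α j) / (2 * q)))
                    * Real.exp (α m / (2 * q)) := by
            apply Finset.sum_le_sum
            intro j hj
            have hjm : j ≤ m := Nat.lt_succ_iff.mp (Finset.mem_range.mp hj)
            rw [mul_assoc, ← Real.exp_add]
            have hαjm : α j ≤ α m := hα_mono hjm
            have : (0:ℝ) ≤ -(α j) / (2*q) + α m / (2*q) := by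
              rw [← add_div]
              exact div_nonneg (by linarith) (by linarith)
            nlinarith [Real.one_le_exp this, norm_nonneg ((rhaly θ)^[k] (unitSeq n) j)]
          rw [← Finset.sum_mul] at step1
          refine step1.trans ?_
          rw [mul_comm]
          apply mul_le_mul_of_nonneg_left _ (le_of_lt (Real.exp_pos _))
          exact le_trans (Summable.sum_le_tsum _ (fun j _ => by positivity) ihs) iht
        calc ‖rhaly θ ((rhaly θ)^[k] (unitSeq n)) m‖ * Real.exp (-(α m) / q)
            ≤ ((Real.exp (α m / (2 * q)) * S ^ k) * ‖θ m‖) * Real.exp (-(α m) / q) := by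
              apply mul_le_mul_of_nonneg_right _ (le_of_lt (Real.exp_pos _))
              exact h1.trans (mul_le_mul_of_nonneg_right h2 (norm_nonneg _))
          _ = S ^ k * (‖θ m‖ * (Real.exp (α m / (2 * q)) * Real.exp (-(α m) / q))) := by ring
          _ = S ^ k * (‖θ m‖ * Real.exp (-(α m) / (2 * q))) := by
              rw [← Real.exp_add]
              congr 2
              field_simp
              ring
      have hθ2 := hθR (2 * q) h2q
      have hsum : Summable (fun m => ‖(rhaly θ)^[k+1] (unitSeq n) m‖ * Real.exp (-(α m) / q)) :=
        Summable.of_nonneg_of_le (fun j => by positivity) hpt (hθ2.1.mul_left _)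
      refine ⟨hsum, ?_⟩
      calc ∑' j : ℕ, ‖(rhaly θ)^[k+1] (unitSeq n) j‖ * Real.exp (-(α j) / q)
          ≤ ∑' j : ℕ, S ^ k * (‖θ j‖ * Real.exp (-(α j) / (2 * q))) :=
            Summable.tsum_le_tsum hpt hsum (hθ2.1.mul_left _)
        _ = S ^ k * ∑' j : ℕ, ‖θ j‖ * Real.exp (-(α j) / (2 * q)) := tsum_mul_left
        _ ≤ S ^ k * S := mul_le_mul_of_nonneg_left hθ2.2 (pow_nonneg hS0 k)
        _ = S ^ (k + 1) := (pow_succ S k).symm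
  -- final assembly
  have hC1 : (1:ℝ) ≤ max S 1 := le_max_right _ _
  have hC0 : (0:ℝ) < max S 1 := lt_of_lt_of_le one_pos hC1
  rcases lt_or_ge m n with hmn | hmn
  · rw [hsupp k m hmn, norm_zero, zero_mul]
    positivity
  · have hP : (0:ℝ) < (p:ℝ) := by exact_mod_cast hp
    have hq1 : (0:ℝ) < 3 * (p:ℝ) / 2 := by linarith
    obtain ⟨ksum, ktsum⟩ := key k hk (3 * (p:ℝ) / 2) hq1
    have hsingle : ‖(rhaly θ)^[k] (unitSeq n) m‖ * Real.exp (-(α m) / (3 * (p:ℝ) / 2)) ≤ S ^ k :=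
      le_trans (Summable.le_tsum ksum m (fun j _ => by positivity)) ktsum
    have hsplit : -(α m) / (p:ℝ) = -(α m) / (3 * (p:ℝ) / 2) + -(α m) / (3 * (p:ℝ)) := by
      field_simp
      ring
    rw [hsplit, Real.exp_add, ← mul_assoc]
    have hmono : Real.exp (-(α m) / (3 * (p:ℝ))) ≤ Real.exp (-(α n) / (3 * (p:ℝ))) := by
      apply Real.exp_le_exp.mpr
      rw [neg_div, neg_div, neg_le_neg_iff]
      exact div_le_div_of_nonneg_right (hα_mono hmn) (by linarith)
    calc (‖(rhaly θ)^[k] (unitSeq n) m‖ * Real.exp (-(α m) / (3 * (p:ℝ) / 2)))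
          * Real.exp (-(α m) / (3 * (p:ℝ)))
        ≤ S ^ k * Real.exp (-(α n) / (3 * (p:ℝ))) :=
          mul_le_mul hsingle hmono (le_of_lt (Real.exp_pos _)) (pow_nonneg hS0 k)
      _ ≤ (max S 1) ^ k * Real.exp (-(α n) / (3 * (p:ℝ))) := by
          apply mul_le_mul_of_nonneg_right _ (le_of_lt (Real.exp_pos _))
          exact pow_le_pow_left₀ hS0 (le_max_left S 1) k
      _ = (max S 1) ^ k * Real.exp (-(α n) / (3 * (p:ℕ) : ℝ)) := by norm_cast
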